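/- Let a0, a1, a2 : ℝ → ℝ and let x1, x2, x3 : ℝ → ℝ be differentiable functions each satisfying the Riccati equation x'(t) = a0(t) + a1(t)·x(t) + a2(t)·x(t)² for all t ∈ ℝ. Let k ∈ ℝ and assume that (x3(t) − x2(t)) + k·(x3(t) − x1(t)) ≠ 0 for all t ∈ ℝ. Then the function x(t) := (x1(t)·(x3(t) − x2(t)) + k·x2(t)·(x3(t) − x1(t))) / ((x3(t) − x2(t)) + k·(x3(t) − x1(t))) is differentiable and satisfies x'(t) = a0(t) + a1(t)·x(t) + a2(t)·x(t)² for all t ∈ ℝ. -/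

import Mathlib

/-- The superposition rule for the Riccati equation: given three particular
solutions `x1, x2, x3` and a constant `k` such that the denominator never
vanishes, the combination is again a solution. -/
theorem riccati_superposition_rule
    (a0 a1 a2 x1 x2 x3 : ℝ → ℝ) (k : ℝ)
    (hx1 : Differentiable ℝ x1) (hx2 : Differentiable ℝ x2) (hx3 : Differentiable ℝ x3)
    (hx1' : ∀ t, deriv x1 t = a0 t + a1 t * x1 t + a2 t * (x1 t) ^ 2)
    (hx2' : ∀ t, deriv x2 t = a0 t + a1 t * x2 t + a2 t * (x2 t) ^ 2)
    (hx3' : ∀ t, deriv x3 t = a0 t + a1 t * x3 t + a2 t * (x3 t) ^ 2)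
    (hden : ∀ t, (x3 t - x2 t) + k * (x3 t - x1 t) ≠ 0) :
    Differentiable ℝ
      (fun t => (x1 t * (x3 t - x2 t) + k * x2 t * (x3 t - x1 t)) /
        ((x3 t - x2 t) + k * (x3 t - x1 t))) ∧
    ∀ t, deriv (fun t => (x1 t * (x3 t - x2 t) + k * x2 t * (x3 t - x1 t)) /
        ((x3 t - x2 t) + k * (x3 t - x1 t))) t =
      a0 t + a1 t * ((x1 t * (x3 t - x2 t) + k * x2 t * (x3 t - x1 t)) /
        ((x3 t - x2 t) + k * (x3 t - x1 t))) +
      a2 t * ((x1 t * (x3 t - x2 t) + k * x2 t * (x3 t - x1 t)) /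
        ((x3 t - x2 t) + k * (x3 t - x1 t))) ^ 2 := by
  have key : ∀ t, HasDerivAt
      (fun t => (x1 t * (x3 t - x2 t) + k * x2 t * (x3 t - x1 t)) /
        ((x3 t - x2 t) + k * (x3 t - x1 t)))
      (a0 t + a1 t * ((x1 t * (x3 t - x2 t) + k * x2 t * (x3 t - x1 t)) /
        ((x3 t - x2 t) + k * (x3 t - x1 t))) +
      a2 t * ((x1 t * (x3 t - x2 t) + k * x2 t * (x3 t - x1 t)) /
        ((x3 t - x2 t) + k * (x3 t - x1 t))) ^ 2) t := by
    intro t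
    have h1 : HasDerivAt x1 (a0 t + a1 t * x1 t + a2 t * (x1 t) ^ 2) t := by
      rw [← hx1' t]; exact (hx1 t).hasDerivAt
    have h2 : HasDerivAt x2 (a0 t + a1 t * x2 t + a2 t * (x2 t) ^ 2) t := by
      rw [← hx2' t]; exact (hx2 t).hasDerivAt
    have h3 : HasDerivAt x3 (a0 t + a1 t * x3 t + a2 t * (x3 t) ^ 2) t := by
      rw [← hx3' t]; exact (hx3 t).hasDerivAt
    have hN : HasDerivAt (fun t => x1 t * (x3 t - x2 t) + k * x2 t * (x3 t - x1 t))
        ((a0 t + a1 t * x1 t + a2 t * (x1 t) ^ 2) * (x3 t - x2 t)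
          + x1 t * ((a0 t + a1 t * x3 t + a2 t * (x3 t) ^ 2)
            - (a0 t + a1 t * x2 t + a2 t * (x2 t) ^ 2))
          + (k * (a0 t + a1 t * x2 t + a2 t * (x2 t) ^ 2) * (x3 t - x1 t)
            + k * x2 t * ((a0 t + a1 t * x3 t + a2 t * (x3 t) ^ 2)
              - (a0 t + a1 t * x1 t + a2 t * (x1 t) ^ 2)))) t := by
      exact (h1.mul (h3.sub h2)).add (((h2.const_mul k).mul (h3.sub h1)))
    have hD : HasDerivAt (fun t => (x3 t - x2 t) + k * (x3 t - x1 t))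
        (((a0 t + a1 t * x3 t + a2 t * (x3 t) ^ 2)
          - (a0 t + a1 t * x2 t + a2 t * (x2 t) ^ 2))
          + k * ((a0 t + a1 t * x3 t + a2 t * (x3 t) ^ 2)
            - (a0 t + a1 t * x1 t + a2 t * (x1 t) ^ 2))) t := by
      exact (h3.sub h2).add ((h3.sub h1).const_mul k)
    have hq := hN.div hD (hden t)
    have hd := hden t
    refine hq.congr_deriv ?_
    symm
    rw [eq_div_iff (pow_ne_zero 2 hd)]
    field_simp
    ring
  constructor
  · intro t; exact (key t).differentiableAt
  · intro t; exact (key t).deriv
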